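/- For every real x ≥ e^4, G(x) > x/(x+1) > 0, where G(x) := x/(x+1) − (1 + log x) + x/(1 + log x) − log(1 + log x). -/
import Mathlib


open Real

/-- `G(x) = x/(x+1) − (1 + log x) + x/(1 + log x) − log(1 + log x)`. -/
noncomputable def G (x : ℝ) : ℝ :=
  x / (x + 1) - (1 + Real.log x) + x / (1 + Real.log x) - Real.log (1 + Real.log x)

theorem G_gt (x : ℝ) (hx : Real.exp 4 ≤ x) :
    x / (x + 1) < G x ∧ 0 < x / (x + 1) := by
  have hxpos : 0 < x := lt_of_lt_of_le (Real.exp_pos 4) hx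
  have hy : (4 : ℝ) ≤ Real.log x := by
    have := Real.log_le_log (Real.exp_pos 4) hx
    rwa [Real.log_exp] at this
  set y := Real.log x with hydef
  have hL : (5 : ℝ) ≤ 1 + y := by linarith
  have hLpos : (0 : ℝ) < 1 + y := by linarith
  -- log (1+y) ≤ (1+y)/e ≤ 0.368 * (1+y)
  have hlogL : Real.log (1 + y) ≤ 0.368 * (1 + y) := by
    have h1 : Real.log ((1 + y) / Real.exp 1) ≤ (1 + y) / Real.exp 1 - 1 :=
      Real.log_le_sub_one_of_pos (by positivity)
    rw [Real.log_div (by linarith) (Real.exp_ne_zero 1), Real.log_exp] at h1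
    have he : (2.7182818283 : ℝ) < Real.exp 1 := Real.exp_one_gt_d9
    have h2 : (1 + y) / Real.exp 1 ≤ 0.368 * (1 + y) := by
      rw [div_le_iff₀ (Real.exp_pos 1)]
      nlinarith
    linarith
  -- exp y lower bound: degree ≤ 5 Taylor sum
  have hsum : 1 + y + y ^ 2 / 2 + y ^ 3 / 6 + y ^ 4 / 24 + y ^ 5 / 120 ≤ Real.exp y := by
    have := Real.sum_le_exp_of_nonneg (by linarith : (0:ℝ) ≤ y) 6
    simp [Finset.sum_range_succ, Nat.factorial] at this
    linarith
  have hxy : x = Real.exp y := (Real.exp_log hxpos).symm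
  -- key inequality: x > (1+y)^2 + (1+y) * log(1+y)
  have hkey : (1 + y) ^ 2 + (1 + y) * Real.log (1 + y) < x := by
    have h3 : (1 + y) * Real.log (1 + y) ≤ 0.368 * (1 + y) ^ 2 := by
      nlinarith
    have h4 : (1.368 : ℝ) * (1 + y) ^ 2 <
        1 + y + y ^ 2 / 2 + y ^ 3 / 6 + y ^ 4 / 24 + y ^ 5 / 120 := by
      nlinarith [sq_nonneg (y - 4), sq_nonneg y, pow_le_pow_left₀ (by norm_num : (0:ℝ) ≤ 4) hy 3]
    rw [hxy]
    nlinarith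
  have hdiv : (1 + y) + Real.log (1 + y) < x / (1 + y) := by
    rw [lt_div_iff₀ hLpos]
    nlinarith
  constructor
  · unfold G
    have h0 : 0 < x / (1 + y) - ((1 + y) + Real.log (1 + y)) := by linarith
    linarith
  · positivity
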